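/- Influence of upweighting a training sample on a test loss (Appendix A.1, Eq. (9)). Let E = ℝ^d with the Euclidean inner product, let R, L, L_test : E → ℝ, and let θ : ℝ → E with θ(0) = θ̂. Assume: (i) the gradient map ∇R : E → E is differentiable at θ̂ with invertible Fréchet derivative H : E → E; (ii) ∇L is continuous at θ̂; (iii) θ is differentiable at 0; (iv) for all ε in some neighborhood of 0, ∇R(θ(ε)) + ε · ∇L(θ(ε)) = 0; (v) L_test is differentiable at θ̂. Then the derivative of the function ε ↦ L_test(θ(ε)) at ε = 0 equals −⟨∇L_test(θ̂), H⁻¹(∇L(θ̂))⟩. -/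

import Mathlib

open scoped RealInnerProductSpace

/-- **Influence of upweighting a training sample on a test loss (Appendix A.1, Eq. (9)).**
Under the same assumptions as the first-order parameter response, and with `L_test`
differentiable at `θ̂`, the derivative of `ε ↦ L_test(θ(ε))` at `ε = 0` equals
`-⟪∇L_test(θ̂), H⁻¹(∇L(θ̂))⟫`. -/
theorem upweighting_influence_on_test_loss
    {d : ℕ} (R L Ltest : EuclideanSpace ℝ (Fin d) → ℝ)
    (θ : ℝ → EuclideanSpace ℝ (Fin d)) (θhat : EuclideanSpace ℝ (Fin d))
    (hθ0 : θ 0 = θhat)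
    (H : EuclideanSpace ℝ (Fin d) ≃L[ℝ] EuclideanSpace ℝ (Fin d))
    (hR : HasFDerivAt (fun x => gradient R x)
      (H : EuclideanSpace ℝ (Fin d) →L[ℝ] EuclideanSpace ℝ (Fin d)) θhat)
    (hL : ContinuousAt (fun x => gradient L x) θhat)
    (hθ : DifferentiableAt ℝ θ 0)
    (hstat : ∀ᶠ ε in nhds (0 : ℝ), gradient R (θ ε) + ε • gradient L (θ ε) = 0)
    (hLtest : DifferentiableAt ℝ Ltest θhat) :
    deriv (fun ε => Ltest (θ ε)) 0
      = -⟪gradient Ltest θhat, H.symm (gradient L θhat)⟫ := by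
  subst hθ0
  set v := deriv θ 0 with hv
  have hθ' : HasDerivAt θ v 0 := hθ.hasDerivAt
  -- derivative of ε ↦ gradient R (θ ε)
  have hA : HasDerivAt (fun ε => gradient R (θ ε)) (H v) 0 := by
    have := hR.comp_hasDerivAt 0 hθ'
    exact this
  -- derivative of ε ↦ ε • gradient L (θ ε)
  have hθcont : ContinuousAt θ 0 := hθ.continuousAt
  have hLc : Filter.Tendsto (fun ε => gradient L (θ ε)) (nhds 0)
      (nhds (gradient L (θ 0))) := (hL.comp hθcont).tendsto
  have hB : HasDerivAt (fun ε : ℝ => ε • gradient L (θ ε)) (gradient L (θ 0)) 0 := by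
    rw [hasDerivAt_iff_tendsto_slope]
    have h1 : Filter.Tendsto (fun ε => gradient L (θ ε)) (nhdsWithin 0 {(0:ℝ)}ᶜ)
        (nhds (gradient L (θ 0))) := hLc.mono_left nhdsWithin_le_nhds
    refine h1.congr' ?_
    filter_upwards [self_mem_nhdsWithin] with ε hε
    have hε0 : ε ≠ 0 := hε
    simp [slope_def_module, hε0, smul_smul, inv_mul_cancel₀ hε0]
  have hsum : HasDerivAt (fun ε => gradient R (θ ε) + ε • gradient L (θ ε))
      (H v + gradient L (θ 0)) 0 := hA.add hB
  have hzero : HasDerivAt (fun _ : ℝ => (0 : EuclideanSpace ℝ (Fin d)))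
      (H v + gradient L (θ 0)) 0 := by
    refine hsum.congr_of_eventuallyEq ?_
    filter_upwards [hstat] with ε hε using hε.symm
  have heq : H v + gradient L (θ 0) = 0 := ((hasDerivAt_const (0:ℝ) _).unique hzero).symm
  have hveq : v = -(H.symm (gradient L (θ 0))) := by
    have hHv : H v = -(gradient L (θ 0)) := by
      linear_combination (norm := module) heq
    have := congrArg H.symm hHv
    simpa using this
  have hC : HasDerivAt (fun ε => Ltest (θ ε)) (fderiv ℝ Ltest (θ 0) v) 0 :=
    (hLtest.hasFDerivAt.comp_hasDerivAt 0 hθ')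
  rw [hC.deriv, hveq]
  have hgr : ∀ w, (fderiv ℝ Ltest (θ 0)) w = ⟪gradient Ltest (θ 0), w⟫ := by
    intro w
    rw [gradient, InnerProductSpace.toDual_symm_apply]
  rw [hgr]
  simp [inner_neg_right]
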